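/- arXiv:0808.0571 — 2 statements merged into one kernel-verified Lean document; each statement's English description precedes it below -/
import Mathlib

section
/- For n = 2, the determinant of the 2×2 matrix (a(i,j))_{1≤i,j≤2} equals ∏_{1≤i≤j≤k≤2} ((1-q^{i+j+k-1})/(1-q^{i+j+k-2}))^2, as an identity of rational functions in q. -/
open Finset

/-- The indeterminate `q`, as a rational function. -/
noncomputable def qq : RatFunc ℚ := RatFunc.X

/-- The Gaussian binomial coefficient as a rational function in `q`. -/
noncomputable def qbinom (a b : ℕ) : RatFunc ℚ :=
  ∏ t ∈ Finset.range b, (1 - qq ^ (a - t)) / (1 - qq ^ (b - t))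

/-- Okada's matrix entry `a(i,j)` (1-indexed). -/
noncomputable def okadaEntry (i j : ℕ) : RatFunc ℚ :=
  qq ^ (i + j - 1) * (qbinom (i + j - 2) (i - 1) + qq * qbinom (i + j - 1) i)
    + (1 + qq ^ i) * (if i = j then 1 else 0) - (if i = j + 1 then 1 else 0)

/-- Triples (i,j,k) with 1 ≤ i ≤ j ≤ k ≤ n. -/
def tsppTriples (n : ℕ) : Finset (ℕ × ℕ × ℕ) :=
  ((Finset.Icc 1 n) ×ˢ (Finset.Icc 1 n) ×ˢ (Finset.Icc 1 n)).filter
    (fun t => t.1 ≤ t.2.1 ∧ t.2.1 ≤ t.2.2)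

/-- Okada's conjectured right-hand side. -/
noncomputable def okadaRHS (n : ℕ) : RatFunc ℚ :=
  ∏ t ∈ tsppTriples n,
    ((1 - qq ^ (t.1 + t.2.1 + t.2.2 - 1)) / (1 - qq ^ (t.1 + t.2.1 + t.2.2 - 2))) ^ 2

lemma one_sub_qq_pow_ne (n : ℕ) (hn : n ≠ 0) : (1 : RatFunc ℚ) - qq ^ n ≠ 0 := by
  have hp : (1 - Polynomial.X ^ n : Polynomial ℚ) ≠ 0 := by
    intro h
    have h0 := congrArg (fun p => Polynomial.coeff p 0) h
    simp [Polynomial.coeff_X_pow, Ne.symm hn] at h0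
  have h2 := RatFunc.algebraMap_ne_zero hp
  simpa [qq, map_sub, map_pow, RatFunc.algebraMap_X] using h2

theorem okada_det_2 :
    Matrix.det (fun i j : Fin 2 => okadaEntry (i + 1) (j + 1)) = okadaRHS 2 := by
  have h1 : (1 : RatFunc ℚ) - qq ≠ 0 := by
    simpa using one_sub_qq_pow_ne 1 one_ne_zero
  have h2 := one_sub_qq_pow_ne 2 two_ne_zero
  have h3 := one_sub_qq_pow_ne 3 three_ne_zero
  have h4 := one_sub_qq_pow_ne 4 four_ne_zero
  have e11 : okadaEntry 1 1 = (1 + qq) ^ 2 := by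
    simp only [okadaEntry, qbinom, Finset.prod_range_succ, Finset.prod_range_zero,
      Nat.reduceAdd, Nat.reduceSub, Nat.reduceEqDiff, reduceIte, pow_one, one_mul, mul_one,
      mul_zero, add_zero, sub_zero]
    field_simp
    try ring
  have e12 : okadaEntry 1 2 = qq ^ 2 * (1 + qq + qq ^ 2) := by
    simp only [okadaEntry, qbinom, Finset.prod_range_succ, Finset.prod_range_zero,
      Nat.reduceAdd, Nat.reduceSub, Nat.reduceEqDiff, reduceIte, pow_one, one_mul, mul_one,
      mul_zero, add_zero, sub_zero]
    field_simp
    try ring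
  have e21 : okadaEntry 2 1 = qq ^ 2 * (1 + qq) - 1 := by
    simp only [okadaEntry, qbinom, Finset.prod_range_succ, Finset.prod_range_zero,
      Nat.reduceAdd, Nat.reduceSub, Nat.reduceEqDiff, reduceIte, pow_one, one_mul, mul_one,
      mul_zero, add_zero, sub_zero]
    field_simp
    try ring
  have e22 : okadaEntry 2 2 = qq ^ 3 * (1 + 2 * qq + qq ^ 2 + qq ^ 3) + 1 + qq ^ 2 := by
    simp only [okadaEntry, qbinom, Finset.prod_range_succ, Finset.prod_range_zero,
      Nat.reduceAdd, Nat.reduceSub, Nat.reduceEqDiff, reduceIte, pow_one, one_mul, mul_one,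
      mul_zero, add_zero, sub_zero]
    field_simp
    try ring
  have hT : tsppTriples 2 = {(1,1,1),(1,1,2),(1,2,2),(2,2,2)} := by decide
  have eR : okadaRHS 2 = ((1 - qq ^ 5) / (1 - qq)) ^ 2 := by
    rw [okadaRHS, hT, Finset.prod_insert (by decide), Finset.prod_insert (by decide),
      Finset.prod_insert (by decide), Finset.prod_singleton]
    simp only [Nat.reduceAdd, Nat.reduceSub, pow_one]
    rw [div_pow, div_pow, div_pow, div_pow, div_pow,
      div_mul_div_comm, div_mul_div_comm, div_mul_div_comm, div_eq_div_iff]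
    · ring
    all_goals
      repeat' first
        | assumption
        | exact one_ne_zero
        | apply mul_ne_zero
        | apply pow_ne_zero
  rw [show (fun i j : Fin 2 => okadaEntry (i + 1) (j + 1)) = Matrix.of (fun i j : Fin 2 => okadaEntry (i + 1) (j + 1)) from rfl, Matrix.det_fin_two]
  show okadaEntry 1 1 * okadaEntry 2 2 - okadaEntry 1 2 * okadaEntry 2 1 = okadaRHS 2
  rw [e11, e12, e21, e22, eR, div_pow, eq_div_iff (pow_ne_zero 2 h1)]
  ring
end

section
/- For n = 3, the determinant of the 3×3 matrix (a(i,j))_{1≤i,j≤3} equals ∏_{1≤i≤j≤k≤3} ((1-q^{i+j+k-1})/(1-q^{i+j+k-2}))^2, as an identity of rational functions in q. -/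
open Finset

lemma qq_pow_ne_one (k : ℕ) (hk : 1 ≤ k) : (1 : RatFunc ℚ) - qq ^ k ≠ 0 := by
  rw [sub_ne_zero]
  intro h
  have h2 : (algebraMap (Polynomial ℚ) (RatFunc ℚ)) (Polynomial.X ^ k) =
      (algebraMap (Polynomial ℚ) (RatFunc ℚ)) 1 := by
    simpa [map_pow, RatFunc.algebraMap_X, qq] using h.symm
  have h3 : (Polynomial.X : Polynomial ℚ) ^ k = 1 := RatFunc.algebraMap_injective ℚ h2
  have := congrArg Polynomial.natDegree h3
  simp [Polynomial.natDegree_X_pow] at this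
  omega

lemma h1q : (1:RatFunc ℚ) - qq ≠ 0 := by simpa using qq_pow_ne_one 1 le_rfl

lemma qb00 : qbinom 0 0 = 1 := by simp [qbinom]
lemma qb10 : qbinom 1 0 = 1 := by simp [qbinom]
lemma qb20 : qbinom 2 0 = 1 := by simp [qbinom]
lemma qb11 : qbinom 1 1 = 1 := by
  simp [qbinom, Finset.prod_range_one, div_self (sub_ne_zero.mpr (by simpa using (qq_pow_ne_one 1 le_rfl)))]
  exact h1q
lemma qb21 : qbinom 2 1 = 1 + qq := by
  simp only [qbinom, Finset.prod_range_one, Nat.sub_zero, pow_one]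
  rw [div_eq_iff h1q]; ring
lemma qb31 : qbinom 3 1 = 1 + qq + qq ^ 2 := by
  simp only [qbinom, Finset.prod_range_one, Nat.sub_zero, pow_one]
  rw [div_eq_iff h1q]; ring
lemma qb22 : qbinom 2 2 = 1 := by
  simp only [qbinom, Finset.prod_range_succ, Finset.prod_range_zero, one_mul]
  norm_num
  rw [div_mul_div_comm, div_eq_iff (mul_ne_zero (qq_pow_ne_one 2 (by norm_num)) h1q)]; ring
lemma qb32 : qbinom 3 2 = 1 + qq + qq ^ 2 := by
  simp only [qbinom, Finset.prod_range_succ, Finset.prod_range_zero, one_mul]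
  norm_num
  rw [div_mul_div_comm, div_eq_iff (mul_ne_zero (qq_pow_ne_one 2 (by norm_num)) h1q)]; ring
lemma qb42 : qbinom 4 2 = 1 + qq + 2 * qq ^ 2 + qq ^ 3 + qq ^ 4 := by
  simp only [qbinom, Finset.prod_range_succ, Finset.prod_range_zero, one_mul]
  norm_num
  rw [div_mul_div_comm, div_eq_iff (mul_ne_zero (qq_pow_ne_one 2 (by norm_num)) h1q)]; ring
lemma qb33 : qbinom 3 3 = 1 := by
  simp only [qbinom, Finset.prod_range_succ, Finset.prod_range_zero, one_mul]
  norm_num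
  rw [div_mul_div_comm, div_mul_div_comm,
    div_eq_iff (mul_ne_zero (mul_ne_zero (qq_pow_ne_one 3 (by norm_num)) (qq_pow_ne_one 2 (by norm_num))) h1q)]
  ring
lemma qb43 : qbinom 4 3 = 1 + qq + qq ^ 2 + qq ^ 3 := by
  simp only [qbinom, Finset.prod_range_succ, Finset.prod_range_zero, one_mul]
  norm_num
  rw [div_mul_div_comm, div_mul_div_comm,
    div_eq_iff (mul_ne_zero (mul_ne_zero (qq_pow_ne_one 3 (by norm_num)) (qq_pow_ne_one 2 (by norm_num))) h1q)]
  ring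
lemma qb53 : qbinom 5 3 = 1 + qq + 2 * qq ^ 2 + 2 * qq ^ 3 + 2 * qq ^ 4 + qq ^ 5 + qq ^ 6 := by
  simp only [qbinom, Finset.prod_range_succ, Finset.prod_range_zero, one_mul]
  norm_num
  rw [div_mul_div_comm, div_mul_div_comm,
    div_eq_iff (mul_ne_zero (mul_ne_zero (qq_pow_ne_one 3 (by norm_num)) (qq_pow_ne_one 2 (by norm_num))) h1q)]
  ring

set_option maxHeartbeats 2000000 in
lemma triples3 : tsppTriples 3 = {(1,1,1),(1,1,2),(1,1,3),(1,2,2),(1,2,3),(1,3,3),(2,2,2),(2,2,3),(2,3,3),(3,3,3)} := by decide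

set_option maxHeartbeats 4000000 in
theorem okada_det_3 :
    Matrix.det (fun i j : Fin 3 => okadaEntry (i + 1) (j + 1)) = okadaRHS 3 := by
  have h1 := qq_pow_ne_one 1 (by norm_num)
  have h2 := qq_pow_ne_one 2 (by norm_num)
  have h3 := qq_pow_ne_one 3 (by norm_num)
  have h4 := qq_pow_ne_one 4 (by norm_num)
  have h5 := qq_pow_ne_one 5 (by norm_num)
  have h6 := qq_pow_ne_one 6 (by norm_num)
  have h7 := qq_pow_ne_one 7 (by norm_num)
  change Matrix.det (Matrix.of fun i j : Fin 3 => okadaEntry (i + 1) (j + 1)) = _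
  rw [Matrix.det_fin_three]
  simp only [Matrix.of_apply, okadaEntry, okadaRHS, triples3, Fin.isValue]
  norm_num [qb00, qb10, qb20, qb11, qb21, qb31, qb22, qb32, qb42, qb33, qb43, qb53,
    Finset.prod_insert, Finset.prod_range_succ, Finset.mem_insert,
    Finset.mem_singleton, Prod.mk.injEq, Prod.ext_iff]
  have h1'' : (1:RatFunc ℚ) - qq ≠ 0 := h1q
  simp only [div_pow, div_mul_div_comm]
  rw [eq_div_iff (by simp [mul_eq_zero, pow_eq_zero_iff, h1'', h2, h3, h4, h5, h6, h7])]
  ring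
end
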